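/- Let X be a recurrent Markov chain on a countable state space \Sigma, and let x \in \Sigma and disjoint A, B \subset \Sigma with x \notin A \cup B. Then P_x[\tau_A < \tau_B] = P_x[\tau_A < \tau_B \mid \tau^+_x > \tau_{A\cup B}]; that is, the events \{\tau_A < \tau_B\} and \{\tau^+_x > \tau_{A \cup B}\} are independent under P_x. -/

import Mathlib

open Filter
open scoped Classical

/-- The two-dimensional integer lattice. -/
abbrev Z2 := ℤ × ℤ

/-- Euclidean norm on `Z2`. -/
noncomputable def nrm (x : Z2) : ℝ := Real.sqrt ((x.1 : ℝ) ^ 2 + (x.2 : ℝ) ^ 2)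

/-- Nearest-neighbour relation on `Z2`. -/
def nbr (x y : Z2) : Prop := (x.1 - y.1).natAbs + (x.2 - y.2).natAbs = 1

/-- `srwP n x = P_x[S_n = 0]`, the n-step probability for the simple random walk on `Z2`
to be at the origin, defined by first-step decomposition. -/
noncomputable def srwP : ℕ → Z2 → ℝ
  | 0, x => if x = 0 then 1 else 0
  | n + 1, x =>
      (srwP n (x + (1, 0)) + srwP n (x - (1, 0)) + srwP n (x + (0, 1)) + srwP n (x - (0, 1))) / 4

/-- `a` is the potential kernel of the 2D simple random walk:
`a x = ∑_{k=0}^∞ (P_0[S_k = 0] - P_x[S_k = 0])` (convergence of the series). -/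
def IsPotentialKernel (a : Z2 → ℝ) : Prop :=
  ∀ x : Z2,
    Tendsto (fun N => ∑ k ∈ Finset.range N, (srwP k 0 - srwP k x)) atTop (nhds (a x))

/-- Transition matrix of the conditioned walk `Ŝ` (Doob h-transform by `a`):
`P̂(x,y) = a(y) / (4 a(x))` when `x ∼ y`, `x ≠ 0`, `y ≠ 0`, and `0` otherwise. -/
noncomputable def Phat (a : Z2 → ℝ) (x y : Z2) : ℝ :=
  if nbr x y ∧ x ≠ 0 ∧ y ≠ 0 then a y / (4 * a x) else 0

/-- n-step transition probabilities of the conditioned walk. -/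
noncomputable def phat (a : Z2 → ℝ) : ℕ → Z2 → Z2 → ℝ
  | 0, x, y => if x = y then 1 else 0
  | n + 1, x, y => ∑' z, Phat a x z * phat a n z y

/-- Green's function of the conditioned walk: expected number of visits to `y` from `x`. -/
noncomputable def Ghat (a : Z2 → ℝ) (x y : Z2) : ℝ := ∑' n, phat a n x y

/-- `hitLE a A n x = P_x[τ̂_A ≤ n]` for the conditioned walk (entrance time, `τ̂_A = min{n ≥ 0 : Ŝ_n ∈ A}`). -/
noncomputable def hitLE (a : Z2 → ℝ) (A : Set Z2) : ℕ → Z2 → ℝ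
  | 0, x => if x ∈ A then 1 else 0
  | n + 1, x => if x ∈ A then 1 else ∑' z, Phat a x z * hitLE a A n z

/-- `hitProb a A x = P_x[τ̂_A < ∞]` for the conditioned walk. -/
noncomputable def hitProb (a : Z2 → ℝ) (A : Set Z2) (x : Z2) : ℝ := ⨆ n, hitLE a A n x

/-- `retLE a A n x = P_x[τ̂⁺_A ≤ n]`, where `τ̂⁺_A = min{n ≥ 1 : Ŝ_n ∈ A}`. -/
noncomputable def retLE (a : Z2 → ℝ) (A : Set Z2) : ℕ → Z2 → ℝ
  | 0, _ => 0
  | n + 1, x => ∑' z, Phat a x z * hitLE a A n z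

/-- `retProb a A x = P_x[τ̂⁺_A < ∞]` for the conditioned walk. -/
noncomputable def retProb (a : Z2 → ℝ) (A : Set Z2) (x : Z2) : ℝ := ⨆ n, retLE a A n x

/-- `beforeLE a A B n x = P_x[τ̂_A ≤ n and τ̂_A < τ̂_B]`. -/
noncomputable def beforeLE (a : Z2 → ℝ) (A B : Set Z2) : ℕ → Z2 → ℝ
  | 0, x => if x ∈ A then 1 else 0
  | n + 1, x =>
      if x ∈ A then 1 else if x ∈ B then 0 else ∑' z, Phat a x z * beforeLE a A B n z

/-- `beforeProb a A B x = P_x[τ̂_A < τ̂_B]` for the conditioned walk. -/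
noncomputable def beforeProb (a : Z2 → ℝ) (A B : Set Z2) (x : Z2) : ℝ := ⨆ n, beforeLE a A B n x

/-- `entLE a A y n x = P_x[τ̂_A ≤ n, Ŝ_{τ̂_A} = y]`. -/
noncomputable def entLE (a : Z2 → ℝ) (A : Set Z2) (y : Z2) : ℕ → Z2 → ℝ
  | 0, x => if x ∈ A ∧ x = y then 1 else 0
  | n + 1, x =>
      if x ∈ A then (if x = y then 1 else 0) else ∑' z, Phat a x z * entLE a A y n z

/-- `entProb a A y x = P_x[τ̂_A < ∞, Ŝ_{τ̂_A} = y]`. -/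
noncomputable def entProb (a : Z2 → ℝ) (A : Set Z2) (y x : Z2) : ℝ := ⨆ n, entLE a A y n x

/-- `visitsGE a y n t x = P_x[#{0 ≤ j ≤ t : Ŝ_j = y} ≥ n]`. -/
noncomputable def visitsGE (a : Z2 → ℝ) (y : Z2) : ℕ → ℕ → Z2 → ℝ
  | 0, _, _ => 1
  | n + 1, 0, x => if x = y ∧ n = 0 then 1 else 0
  | n + 1, t + 1, x =>
      if x = y then ∑' z, Phat a x z * visitsGE a y n t z
      else ∑' z, Phat a x z * visitsGE a y (n + 1) t z

/-- The symmetrized Green's function `ĝ(x,y) = Ĝ(x,y)/a(y)² = (a(x)+a(y)-a(x-y))/(a(x)a(y))`. -/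
noncomputable def ghat (a : Z2 → ℝ) (x y : Z2) : ℝ := (a x + a y - a (x - y)) / (a x * a y)

/-- The discrete disk `B(y, r)` in `Z2`. -/
def diskB (y : Z2) (r : ℝ) : Set Z2 := {z : Z2 | nrm (z - y) ≤ r}

/-- Inner boundary of a set of `Z2`. -/
def innerBd (A : Set Z2) : Set Z2 := {z : Z2 | z ∈ A ∧ ∃ w, nbr z w ∧ w ∉ A}

/-- Distance from a point to a set. -/
noncomputable def distSet (x : Z2) (A : Set Z2) : ℝ := sInf ((fun y => nrm (x - y)) '' A)

/-- Diameter of a set. -/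
noncomputable def diamSet (A : Set Z2) : ℝ :=
  sSup ((fun p : Z2 × Z2 => nrm (p.1 - p.2)) '' (A ×ˢ A))

/-- Escape probability from `y ∈ A` for the conditioned walk: `P_y[τ̂⁺_A = ∞]`. -/
noncomputable def hatEs (a : Z2 → ℝ) (A : Set Z2) (y : Z2) : ℝ :=
  if y ∈ A then 1 - retProb a A y else 0

/-- Capacity of a finite set for the conditioned walk. -/
noncomputable def hatCap (a : Z2 → ℝ) (A : Finset Z2) : ℝ :=
  ∑ y ∈ A, (a y) ^ 2 * hatEs a (↑A) y

/-- Harmonic measure of the conditioned walk on a finite set. -/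
noncomputable def hatHm (a : Z2 → ℝ) (A : Finset Z2) (y : Z2) : ℝ :=
  (a y) ^ 2 * hatEs a (↑A) y / hatCap a A

section GeneralChain

variable {σ : Type*}

/-- `mHitLE P S n z = P_z[τ_S ≤ n]` for the Markov chain with transition matrix `P`. -/
noncomputable def mHitLE (P : σ → σ → ℝ) (S : Set σ) : ℕ → σ → ℝ
  | 0, z => if z ∈ S then 1 else 0
  | n + 1, z => if z ∈ S then 1 else ∑' w, P z w * mHitLE P S n w

/-- `mBeforeLE P A B n z = P_z[τ_A ≤ n, τ_A < τ_B]`. -/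
noncomputable def mBeforeLE (P : σ → σ → ℝ) (A B : Set σ) : ℕ → σ → ℝ
  | 0, z => if z ∈ A then 1 else 0
  | n + 1, z =>
      if z ∈ A then 1 else if z ∈ B then 0 else ∑' w, P z w * mBeforeLE P A B n w

/-- `mBeforeAvoidLE P A B x n z = P_z[τ_A ≤ n, τ_A < τ_B, no visit to x before τ_{A∪B}]`. -/
noncomputable def mBeforeAvoidLE (P : σ → σ → ℝ) (A B : Set σ) (x : σ) : ℕ → σ → ℝ
  | 0, z => if z ∈ A then 1 else 0
  | n + 1, z =>
      if z ∈ A then 1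
      else if z ∈ B ∨ z = x then 0
      else ∑' w, P z w * mBeforeAvoidLE P A B x n w

/-- `mReachAvoidLE P S x n z = P_z[τ_S ≤ n, no visit to x before τ_S]`. -/
noncomputable def mReachAvoidLE (P : σ → σ → ℝ) (S : Set σ) (x : σ) : ℕ → σ → ℝ
  | 0, z => if z ∈ S then 1 else 0
  | n + 1, z =>
      if z ∈ S then 1
      else if z = x then 0
      else ∑' w, P z w * mReachAvoidLE P S x n w

/-! ### Auxiliary development for STATEMENT 15 -/

/-- `mRetReach P S x n z = P_z[τ_x < τ_S, τ_S ≤ n]`: hit `x` strictly before `S`, and still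
reach `S` within `n` steps. -/
noncomputable def mRetReach (P : σ → σ → ℝ) (S : Set σ) (x : σ) : ℕ → σ → ℝ
  | 0, _ => 0
  | n + 1, z =>
      if z ∈ S then 0
      else if z = x then mHitLE P S (n + 1) x
      else ∑' w, P z w * mRetReach P S x n w

section AuxIndep

variable {P : σ → σ → ℝ}

private lemma summable_row (hProw : ∀ z, ∑' w, P z w = 1) (z : σ) : Summable (P z) := by
  by_contra h
  have h1 := hProw z
  rw [tsum_eq_zero_of_not_summable h] at h1
  norm_num at h1

private lemma summable_mul_of_bounds (hPnn : ∀ z w, 0 ≤ P z w)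
    (hProw : ∀ z, ∑' w, P z w = 1) (z : σ) {f : σ → ℝ} {C : ℝ}
    (hf0 : ∀ w, 0 ≤ f w) (hfC : ∀ w, f w ≤ C) :
    Summable fun w => P z w * f w :=
  Summable.of_nonneg_of_le (fun w => mul_nonneg (hPnn z w) (hf0 w))
    (fun w => mul_le_mul_of_nonneg_left (hfC w) (hPnn z w))
    ((summable_row hProw z).mul_right C)

private lemma tsum_mul_le_one (hPnn : ∀ z w, 0 ≤ P z w)
    (hProw : ∀ z, ∑' w, P z w = 1) (z : σ) {f : σ → ℝ}
    (hf0 : ∀ w, 0 ≤ f w) (hf1 : ∀ w, f w ≤ 1) :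
    ∑' w, P z w * f w ≤ 1 := by
  calc ∑' w, P z w * f w ≤ ∑' w, P z w :=
        Summable.tsum_le_tsum (fun w => mul_le_of_le_one_right (hPnn z w) (hf1 w))
          (summable_mul_of_bounds hPnn hProw z hf0 hf1) (summable_row hProw z)
    _ = 1 := hProw z

private lemma tsum_mul_mono (hPnn : ∀ z w, 0 ≤ P z w)
    (hProw : ∀ z, ∑' w, P z w = 1) (z : σ) {f g : σ → ℝ} {C : ℝ}
    (hf0 : ∀ w, 0 ≤ f w) (hfg : ∀ w, f w ≤ g w) (hgC : ∀ w, g w ≤ C) :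
    ∑' w, P z w * f w ≤ ∑' w, P z w * g w :=
  Summable.tsum_le_tsum (fun w => mul_le_mul_of_nonneg_left (hfg w) (hPnn z w))
    (summable_mul_of_bounds hPnn hProw z hf0 (fun w => (hfg w).trans (hgC w)))
    (summable_mul_of_bounds hPnn hProw z (fun w => (hf0 w).trans (hfg w)) hgC)

/-- Generic `[0,1]` bounds for recursively-defined hitting-type probabilities. -/
private lemma gen_bounds (hPnn : ∀ z w, 0 ≤ P z w) (hProw : ∀ z, ∑' w, P z w = 1)
    {F : ℕ → σ → ℝ} (h0 : ∀ z, 0 ≤ F 0 z ∧ F 0 z ≤ 1)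
    (hrec : ∀ z, (∀ n, F (n + 1) z = ∑' w, P z w * F n w) ∨
      (∀ n, 0 ≤ F (n + 1) z ∧ F (n + 1) z ≤ 1)) :
    ∀ n z, 0 ≤ F n z ∧ F n z ≤ 1 := by
  intro n
  induction n with
  | zero => exact h0
  | succ n ih =>
    intro z
    rcases hrec z with h | h
    · rw [h n]
      exact ⟨tsum_nonneg fun w => mul_nonneg (hPnn z w) (ih w).1,
        tsum_mul_le_one hPnn hProw z (fun w => (ih w).1) (fun w => (ih w).2)⟩
    · exact h n

/-- Generic monotonicity-in-`n` for recursively-defined hitting-type probabilities. -/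
private lemma gen_mono (hPnn : ∀ z w, 0 ≤ P z w) (hProw : ∀ z, ∑' w, P z w = 1)
    {F : ℕ → σ → ℝ} (hb : ∀ n z, 0 ≤ F n z ∧ F n z ≤ 1)
    (h0 : ∀ z, F 0 z ≤ F 1 z)
    (hrec : ∀ z, (∀ n, F (n + 1) z = ∑' w, P z w * F n w) ∨
      (∀ n, F (n + 1) z ≤ F (n + 2) z)) :
    ∀ n z, F n z ≤ F (n + 1) z := by
  intro n
  induction n with
  | zero => exact h0
  | succ n ih =>
    intro z
    rcases hrec z with h | h
    · rw [h n, h (n + 1)]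
      exact tsum_mul_mono hPnn hProw z (fun w => (hb n w).1) ih (fun w => (hb (n + 1) w).2)
    · exact h n

private lemma bdd_range {f : ℕ → ℝ} (h1 : ∀ n, f n ≤ 1) : BddAbove (Set.range f) :=
  ⟨1, by rintro _ ⟨n, rfl⟩; exact h1 n⟩

private lemma le_sup_of_le_one {f : ℕ → ℝ} (h1 : ∀ n, f n ≤ 1) (n : ℕ) : f n ≤ ⨆ m, f m :=
  le_ciSup (bdd_range h1) n

private lemma tendsto_sup_of_mono {f : ℕ → ℝ} (hm : ∀ n, f n ≤ f (n + 1)) (h1 : ∀ n, f n ≤ 1) :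
    Filter.Tendsto f Filter.atTop (nhds (⨆ n, f n)) :=
  tendsto_atTop_ciSup (monotone_nat_of_le_succ hm) (bdd_range h1)

private lemma mHitLE_bounds (hPnn : ∀ z w, 0 ≤ P z w) (hProw : ∀ z, ∑' w, P z w = 1) (S : Set σ) : ∀ n z, 0 ≤ mHitLE P S n z ∧ mHitLE P S n z ≤ 1 := by
  apply gen_bounds hPnn hProw
  · intro z; simp only [mHitLE]; split_ifs <;> norm_num
  · intro z
    by_cases hz : z ∈ S
    · right; intro n; simp [mHitLE, hz]
    · left; intro n; simp [mHitLE, hz]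

private lemma mHitLE_mono (hPnn : ∀ z w, 0 ≤ P z w) (hProw : ∀ z, ∑' w, P z w = 1) (S : Set σ) : ∀ n z, mHitLE P S n z ≤ mHitLE P S (n + 1) z := by
  apply gen_mono hPnn hProw (mHitLE_bounds hPnn hProw S)
  · intro z
    by_cases hz : z ∈ S
    · simp [mHitLE, hz]
    · simp only [mHitLE, if_neg hz]
      exact tsum_nonneg fun w =>
        mul_nonneg (hPnn z w) (mHitLE_bounds hPnn hProw S 0 w).1
  · intro z
    by_cases hz : z ∈ S
    · right; intro n; simp [mHitLE, hz]
    · left; intro n; simp [mHitLE, hz]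

private lemma mBeforeLE_bounds (hPnn : ∀ z w, 0 ≤ P z w) (hProw : ∀ z, ∑' w, P z w = 1) (A B : Set σ) :
    ∀ n z, 0 ≤ mBeforeLE P A B n z ∧ mBeforeLE P A B n z ≤ 1 := by
  apply gen_bounds hPnn hProw
  · intro z; simp only [mBeforeLE]; split_ifs <;> norm_num
  · intro z
    by_cases hA : z ∈ A
    · right; intro n; simp [mBeforeLE, hA]
    by_cases hB : z ∈ B
    · right; intro n; simp [mBeforeLE, hA, hB]
    · left; intro n; simp [mBeforeLE, hA, hB]

private lemma mBeforeLE_mono (hPnn : ∀ z w, 0 ≤ P z w) (hProw : ∀ z, ∑' w, P z w = 1) (A B : Set σ) :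
    ∀ n z, mBeforeLE P A B n z ≤ mBeforeLE P A B (n + 1) z := by
  apply gen_mono hPnn hProw (mBeforeLE_bounds hPnn hProw A B)
  · intro z
    by_cases hA : z ∈ A
    · simp [mBeforeLE, hA]
    by_cases hB : z ∈ B
    · simp [mBeforeLE, hA, hB]
    · simp only [mBeforeLE, if_neg hA, if_neg hB]
      exact tsum_nonneg fun w =>
        mul_nonneg (hPnn z w) (mBeforeLE_bounds hPnn hProw A B 0 w).1
  · intro z
    by_cases hA : z ∈ A
    · right; intro n; simp [mBeforeLE, hA]
    by_cases hB : z ∈ B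
    · right; intro n; simp [mBeforeLE, hA, hB]
    · left; intro n; simp [mBeforeLE, hA, hB]

private lemma mBeforeAvoidLE_bounds (hPnn : ∀ z w, 0 ≤ P z w) (hProw : ∀ z, ∑' w, P z w = 1) (A B : Set σ) (x : σ) :
    ∀ n z, 0 ≤ mBeforeAvoidLE P A B x n z ∧ mBeforeAvoidLE P A B x n z ≤ 1 := by
  apply gen_bounds hPnn hProw
  · intro z; simp only [mBeforeAvoidLE]; split_ifs <;> norm_num
  · intro z
    by_cases hA : z ∈ A
    · right; intro n; simp [mBeforeAvoidLE, hA]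
    by_cases hB : z ∈ B ∨ z = x
    · right; intro n; simp [mBeforeAvoidLE, hA, hB]
    · left; intro n; simp [mBeforeAvoidLE, hA, hB]

private lemma mBeforeAvoidLE_mono (hPnn : ∀ z w, 0 ≤ P z w) (hProw : ∀ z, ∑' w, P z w = 1) (A B : Set σ) (x : σ) :
    ∀ n z, mBeforeAvoidLE P A B x n z ≤ mBeforeAvoidLE P A B x (n + 1) z := by
  apply gen_mono hPnn hProw (mBeforeAvoidLE_bounds hPnn hProw A B x)
  · intro z
    by_cases hA : z ∈ A
    · simp [mBeforeAvoidLE, hA]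
    by_cases hB : z ∈ B ∨ z = x
    · simp [mBeforeAvoidLE, hA, hB]
    · simp only [mBeforeAvoidLE, if_neg hA, if_neg hB]
      exact tsum_nonneg fun w =>
        mul_nonneg (hPnn z w) (mBeforeAvoidLE_bounds hPnn hProw A B x 0 w).1
  · intro z
    by_cases hA : z ∈ A
    · right; intro n; simp [mBeforeAvoidLE, hA]
    by_cases hB : z ∈ B ∨ z = x
    · right; intro n; simp [mBeforeAvoidLE, hA, hB]
    · left; intro n; simp [mBeforeAvoidLE, hA, hB]

private lemma mReachAvoidLE_bounds (hPnn : ∀ z w, 0 ≤ P z w) (hProw : ∀ z, ∑' w, P z w = 1) (S : Set σ) (x : σ) :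
    ∀ n z, 0 ≤ mReachAvoidLE P S x n z ∧ mReachAvoidLE P S x n z ≤ 1 := by
  apply gen_bounds hPnn hProw
  · intro z; simp only [mReachAvoidLE]; split_ifs <;> norm_num
  · intro z
    by_cases hS : z ∈ S
    · right; intro n; simp [mReachAvoidLE, hS]
    by_cases hX : z = x
    · right; intro n; subst hX; simp [mReachAvoidLE, hS]
    · left; intro n; simp [mReachAvoidLE, hS, hX]

private lemma mReachAvoidLE_mono (hPnn : ∀ z w, 0 ≤ P z w) (hProw : ∀ z, ∑' w, P z w = 1) (S : Set σ) (x : σ) :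
    ∀ n z, mReachAvoidLE P S x n z ≤ mReachAvoidLE P S x (n + 1) z := by
  apply gen_mono hPnn hProw (mReachAvoidLE_bounds hPnn hProw S x)
  · intro z
    by_cases hS : z ∈ S
    · simp [mReachAvoidLE, hS]
    by_cases hX : z = x
    · subst hX; simp [mReachAvoidLE, hS]
    · simp only [mReachAvoidLE, if_neg hS, if_neg hX]
      exact tsum_nonneg fun w =>
        mul_nonneg (hPnn z w) (mReachAvoidLE_bounds hPnn hProw S x 0 w).1
  · intro z
    by_cases hS : z ∈ S
    · right; intro n; simp [mReachAvoidLE, hS]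
    by_cases hX : z = x
    · right; intro n; subst hX; simp [mReachAvoidLE, hS]
    · left; intro n; simp [mReachAvoidLE, hS, hX]

private lemma mRetReach_bounds (hPnn : ∀ z w, 0 ≤ P z w) (hProw : ∀ z, ∑' w, P z w = 1) (S : Set σ) (x : σ) :
    ∀ n z, 0 ≤ mRetReach P S x n z ∧ mRetReach P S x n z ≤ 1 := by
  apply gen_bounds hPnn hProw
  · intro z; simp [mRetReach]
  · intro z
    by_cases hS : z ∈ S
    · right; intro n; simp [mRetReach, hS]
    by_cases hX : z = x
    · right; intro n
      simp only [mRetReach, if_neg hS, if_pos hX]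
      exact mHitLE_bounds hPnn hProw S (n + 1) x
    · left; intro n; simp [mRetReach, hS, hX]

private lemma mRetReach_mono (hPnn : ∀ z w, 0 ≤ P z w) (hProw : ∀ z, ∑' w, P z w = 1) (S : Set σ) (x : σ) :
    ∀ n z, mRetReach P S x n z ≤ mRetReach P S x (n + 1) z := by
  apply gen_mono hPnn hProw (mRetReach_bounds hPnn hProw S x)
  · intro z
    by_cases hS : z ∈ S
    · simp [mRetReach, hS]
    by_cases hX : z = x
    · simp only [mRetReach, if_neg hS, if_pos hX]
      exact (mHitLE_bounds hPnn hProw S 1 x).1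
    · simp only [mRetReach, if_neg hS, if_neg hX]
      exact tsum_nonneg fun w =>
        mul_nonneg (hPnn z w) (mRetReach_bounds hPnn hProw S x 0 w).1
  · intro z
    by_cases hS : z ∈ S
    · right; intro n; simp [mRetReach, hS]
    by_cases hX : z = x
    · right; intro n
      simp only [mRetReach, if_neg hS, if_pos hX]
      exact mHitLE_mono hPnn hProw S (n + 1) x
    · left; intro n; simp [mRetReach, hS, hX]

/-! Value lemmas -/

private lemma bval1 {A B : Set σ} {z : σ} (hA : z ∈ A) (n : ℕ) : mBeforeLE P A B n z = 1 := by
  cases n <;> simp [mBeforeLE, hA]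

private lemma bval00 {A B : Set σ} {z : σ} (hA : z ∉ A) : mBeforeLE P A B 0 z = 0 := by
  simp [mBeforeLE, hA]

private lemma bval0 {A B : Set σ} {z : σ} (hA : z ∉ A) (hB : z ∈ B) (n : ℕ) :
    mBeforeLE P A B (n + 1) z = 0 := by simp [mBeforeLE, hA, hB]

private lemma brec {A B : Set σ} {z : σ} (hA : z ∉ A) (hB : z ∉ B) (n : ℕ) :
    mBeforeLE P A B (n + 1) z = ∑' w, P z w * mBeforeLE P A B n w := by
  simp [mBeforeLE, hA, hB]

private lemma baval1 {A B : Set σ} {x z : σ} (hA : z ∈ A) (n : ℕ) :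
    mBeforeAvoidLE P A B x n z = 1 := by cases n <;> simp [mBeforeAvoidLE, hA]

private lemma baval00 {A B : Set σ} {x z : σ} (hA : z ∉ A) :
    mBeforeAvoidLE P A B x 0 z = 0 := by simp [mBeforeAvoidLE, hA]

private lemma baval0 {A B : Set σ} {x z : σ} (hA : z ∉ A) (hB : z ∈ B ∨ z = x) (n : ℕ) :
    mBeforeAvoidLE P A B x (n + 1) z = 0 := by simp [mBeforeAvoidLE, hA, hB]

private lemma barec {A B : Set σ} {x z : σ} (hA : z ∉ A) (hB : ¬(z ∈ B ∨ z = x)) (n : ℕ) :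
    mBeforeAvoidLE P A B x (n + 1) z = ∑' w, P z w * mBeforeAvoidLE P A B x n w := by
  simp only [mBeforeAvoidLE, if_neg hA, if_neg hB]

private lemma raval1 {S : Set σ} {x z : σ} (hS : z ∈ S) (n : ℕ) :
    mReachAvoidLE P S x n z = 1 := by cases n <;> simp [mReachAvoidLE, hS]

private lemma raval00 {S : Set σ} {x z : σ} (hS : z ∉ S) :
    mReachAvoidLE P S x 0 z = 0 := by simp [mReachAvoidLE, hS]

private lemma ravalx {S : Set σ} {x : σ} (hS : x ∉ S) (n : ℕ) :
    mReachAvoidLE P S x (n + 1) x = 0 := by simp [mReachAvoidLE, hS]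

private lemma rarec {S : Set σ} {x z : σ} (hS : z ∉ S) (hX : z ≠ x) (n : ℕ) :
    mReachAvoidLE P S x (n + 1) z = ∑' w, P z w * mReachAvoidLE P S x n w := by
  simp [mReachAvoidLE, hS, hX]

private lemma rbvalS {S : Set σ} {x z : σ} (hS : z ∈ S) (n : ℕ) :
    mRetReach P S x n z = 0 := by cases n <;> simp [mRetReach, hS]

private lemma rbvalx {S : Set σ} {x : σ} (hS : x ∉ S) (n : ℕ) :
    mRetReach P S x (n + 1) x = mHitLE P S (n + 1) x := by simp [mRetReach, hS]

private lemma rbrec {S : Set σ} {x z : σ} (hS : z ∉ S) (hX : z ≠ x) (n : ℕ) :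
    mRetReach P S x (n + 1) z = ∑' w, P z w * mRetReach P S x n w := by
  simp [mRetReach, hS, hX]

private lemma hval1 {S : Set σ} {z : σ} (hS : z ∈ S) (n : ℕ) : mHitLE P S n z = 1 := by
  cases n <;> simp [mHitLE, hS]

private lemma hval00 {S : Set σ} {z : σ} (hS : z ∉ S) : mHitLE P S 0 z = 0 := by
  simp [mHitLE, hS]

private lemma hrec0 {S : Set σ} {z : σ} (hS : z ∉ S) (n : ℕ) :
    mHitLE P S (n + 1) z = ∑' w, P z w * mHitLE P S n w := by simp [mHitLE, hS]

/-! Key inductive inequalities -/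

section KeyIneq

/-- (i): `P_z[τ_A < τ_B, ≤ n] ≤ P_z[same, avoiding x] + P_z[hit x first, ≤ n]·P_x[τ_A < τ_B]`. -/
private lemma key_le_split (hPnn : ∀ z w, 0 ≤ P z w) (hProw : ∀ z, ∑' w, P z w = 1) (A B : Set σ) (x : σ) (hxA : x ∉ A) (hxB : x ∉ B) :
    ∀ n z, mBeforeLE P A B n z ≤ mBeforeAvoidLE P A B x n z +
      mBeforeLE P {x} (A ∪ B) n z * ⨆ m, mBeforeLE P A B m x := by
  have hu0 : (0 : ℝ) ≤ ⨆ m, mBeforeLE P A B m x :=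
    Real.iSup_nonneg fun m => (mBeforeLE_bounds hPnn hProw A B m x).1
  have hu1 : (⨆ m, mBeforeLE P A B m x) ≤ 1 :=
    ciSup_le fun m => (mBeforeLE_bounds hPnn hProw A B m x).2
  intro n
  induction n with
  | zero =>
    intro z
    by_cases hA : z ∈ A
    · have hzx : z ∉ ({x} : Set σ) := by
        simp only [Set.mem_singleton_iff]; rintro rfl; exact hxA hA
      rw [bval1 hA, baval1 hA, bval00 hzx]
      norm_num
    · rw [bval00 hA]
      exact add_nonneg (mBeforeAvoidLE_bounds hPnn hProw A B x 0 z).1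
        (mul_nonneg (mBeforeLE_bounds hPnn hProw {x} (A ∪ B) 0 z).1 hu0)
  | succ n ih =>
    intro z
    by_cases hA : z ∈ A
    · rw [bval1 hA, baval1 hA]
      exact le_add_of_nonneg_right
        (mul_nonneg (mBeforeLE_bounds hPnn hProw {x} (A ∪ B) (n + 1) z).1 hu0)
    by_cases hB : z ∈ B
    · rw [bval0 hA hB]
      exact add_nonneg (mBeforeAvoidLE_bounds hPnn hProw A B x (n + 1) z).1
        (mul_nonneg (mBeforeLE_bounds hPnn hProw {x} (A ∪ B) (n + 1) z).1 hu0)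
    by_cases hX : z = x
    · subst hX
      rw [baval0 hA (Or.inr rfl), bval1 (Set.mem_singleton z)]
      rw [zero_add, one_mul]
      exact le_sup_of_le_one (fun m => (mBeforeLE_bounds hPnn hProw A B m z).2) (n + 1)
    · have hzS : z ∉ A ∪ B := by simp [hA, hB]
      have hzx : z ∉ ({x} : Set σ) := by simpa using hX
      rw [brec hA hB, barec hA (by simp [hB, hX]), brec hzx hzS]
      set u := ⨆ m, mBeforeLE P A B m x with hu
      calc ∑' w, P z w * mBeforeLE P A B n w
          ≤ ∑' w, P z w * (mBeforeAvoidLE P A B x n w + mBeforeLE P {x} (A ∪ B) n w * u) := by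
            refine tsum_mul_mono hPnn hProw z (C := 2)
              (fun w => (mBeforeLE_bounds hPnn hProw A B n w).1) ih (fun w => ?_)
            have h1 := (mBeforeAvoidLE_bounds hPnn hProw A B x n w).2
            have h2 := (mBeforeLE_bounds hPnn hProw {x} (A ∪ B) n w).2
            have h3 := (mBeforeLE_bounds hPnn hProw {x} (A ∪ B) n w).1
            nlinarith
        _ = (∑' w, P z w * mBeforeAvoidLE P A B x n w) +
            (∑' w, P z w * mBeforeLE P {x} (A ∪ B) n w) * u := by
            rw [tsum_congr (fun w => by ring : ∀ w, P z w * (mBeforeAvoidLE P A B x n w + mBeforeLE P {x} (A ∪ B) n w * u)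
                = P z w * mBeforeAvoidLE P A B x n w
                  + P z w * mBeforeLE P {x} (A ∪ B) n w * u)]
            rw [Summable.tsum_add (summable_mul_of_bounds hPnn hProw z
                (fun w => (mBeforeAvoidLE_bounds hPnn hProw A B x n w).1)
                (fun w => (mBeforeAvoidLE_bounds hPnn hProw A B x n w).2))
              ((summable_mul_of_bounds hPnn hProw z
                (fun w => (mBeforeLE_bounds hPnn hProw {x} (A ∪ B) n w).1)
                (fun w => (mBeforeLE_bounds hPnn hProw {x} (A ∪ B) n w).2)).mul_right u)]
            rw [tsum_mul_right]

/-- (ii): the reverse inequality, with separate time budgets. -/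
private lemma key_ge_split (hPnn : ∀ z w, 0 ≤ P z w) (hProw : ∀ z, ∑' w, P z w = 1) (A B : Set σ) (x : σ) (hxA : x ∉ A) (hxB : x ∉ B) :
    ∀ n m z, mBeforeAvoidLE P A B x n z +
        mBeforeLE P {x} (A ∪ B) n z * mBeforeLE P A B m x ≤ mBeforeLE P A B (n + m) z := by
  intro n
  induction n with
  | zero =>
    intro m z
    by_cases hA : z ∈ A
    · have hzx : z ∉ ({x} : Set σ) := by
        simp only [Set.mem_singleton_iff]; rintro rfl; exact hxA hA
      rw [baval1 hA, bval00 hzx, bval1 hA]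
      norm_num
    by_cases hX : z = x
    · subst hX
      rw [baval00 hA, bval1 (Set.mem_singleton z), Nat.zero_add, zero_add, one_mul]
    · have hzx : z ∉ ({x} : Set σ) := by simpa using hX
      rw [baval00 hA, bval00 hzx, zero_add, zero_mul]
      exact (mBeforeLE_bounds hPnn hProw A B (0 + m) z).1
  | succ n ih =>
    intro m z
    by_cases hA : z ∈ A
    · have hzx : z ∉ ({x} : Set σ) := by
        simp only [Set.mem_singleton_iff]; rintro rfl; exact hxA hA
      rw [baval1 hA, bval0 hzx (Set.mem_union_left B hA), bval1 hA]
      norm_num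
    by_cases hB : z ∈ B
    · have hzx : z ∉ ({x} : Set σ) := by
        simp only [Set.mem_singleton_iff]; rintro rfl; exact hxB hB
      rw [baval0 hA (Or.inl hB), bval0 hzx (Set.mem_union_right A hB), zero_add, zero_mul]
      exact (mBeforeLE_bounds hPnn hProw A B (n + 1 + m) z).1
    by_cases hX : z = x
    · subst hX
      rw [baval0 hA (Or.inr rfl), bval1 (Set.mem_singleton z), zero_add, one_mul]
      exact (monotone_nat_of_le_succ fun k => mBeforeLE_mono hPnn hProw A B k z)
        (by omega : m ≤ n + 1 + m)
    · have hzS : z ∉ A ∪ B := by simp [hA, hB]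
      have hzx : z ∉ ({x} : Set σ) := by simpa using hX
      have harith : n + 1 + m = (n + m) + 1 := by omega
      rw [barec hA (by simp [hB, hX]), brec hzx hzS, harith, brec hA hB]
      have hbm0 := (mBeforeLE_bounds hPnn hProw A B m x).1
      have hbm1 := (mBeforeLE_bounds hPnn hProw A B m x).2
      calc (∑' w, P z w * mBeforeAvoidLE P A B x n w) +
            (∑' w, P z w * mBeforeLE P {x} (A ∪ B) n w) * mBeforeLE P A B m x
          = ∑' w, P z w * (mBeforeAvoidLE P A B x n w +
              mBeforeLE P {x} (A ∪ B) n w * mBeforeLE P A B m x) := by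
            rw [tsum_congr (fun w => by ring : ∀ w, P z w * (mBeforeAvoidLE P A B x n w +
                  mBeforeLE P {x} (A ∪ B) n w * mBeforeLE P A B m x)
                = P z w * mBeforeAvoidLE P A B x n w
                  + P z w * mBeforeLE P {x} (A ∪ B) n w * mBeforeLE P A B m x)]
            rw [Summable.tsum_add (summable_mul_of_bounds hPnn hProw z
                (fun w => (mBeforeAvoidLE_bounds hPnn hProw A B x n w).1)
                (fun w => (mBeforeAvoidLE_bounds hPnn hProw A B x n w).2))
              ((summable_mul_of_bounds hPnn hProw z
                (fun w => (mBeforeLE_bounds hPnn hProw {x} (A ∪ B) n w).1)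
                (fun w => (mBeforeLE_bounds hPnn hProw {x} (A ∪ B) n w).2)).mul_right
                (mBeforeLE P A B m x))]
            rw [tsum_mul_right]
        _ ≤ ∑' w, P z w * mBeforeLE P A B (n + m) w := by
            refine tsum_mul_mono hPnn hProw z (C := 1) (fun w => ?_) (fun w => ih m w)
              (fun w => (mBeforeLE_bounds hPnn hProw A B (n + m) w).2)
            exact add_nonneg (mBeforeAvoidLE_bounds hPnn hProw A B x n w).1
              (mul_nonneg (mBeforeLE_bounds hPnn hProw {x} (A ∪ B) n w).1 hbm0)

/-- (iii): avoiding-`x` reach and hit-`x`-first are disjoint events. -/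
private lemma disj_le_one (hPnn : ∀ z w, 0 ≤ P z w) (hProw : ∀ z, ∑' w, P z w = 1) (S : Set σ) (x : σ) (hxS : x ∉ S) :
    ∀ n z, mReachAvoidLE P S x n z + mBeforeLE P {x} S n z ≤ 1 := by
  intro n
  induction n with
  | zero =>
    intro z
    by_cases hS : z ∈ S
    · have hzx : z ∉ ({x} : Set σ) := by
        simp only [Set.mem_singleton_iff]; rintro rfl; exact hxS hS
      rw [raval1 hS, bval00 hzx]; norm_num
    by_cases hX : z = x
    · subst hX; rw [raval00 hS, bval1 (Set.mem_singleton z)]; norm_num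
    · have hzx : z ∉ ({x} : Set σ) := by simpa using hX
      rw [raval00 hS, bval00 hzx]; norm_num
  | succ n ih =>
    intro z
    by_cases hS : z ∈ S
    · have hzx : z ∉ ({x} : Set σ) := by
        simp only [Set.mem_singleton_iff]; rintro rfl; exact hxS hS
      rw [raval1 hS, bval0 hzx hS]; norm_num
    by_cases hX : z = x
    · subst hX; rw [ravalx hxS, bval1 (Set.mem_singleton z)]; norm_num
    · have hzx : z ∉ ({x} : Set σ) := by simpa using hX
      rw [rarec hS hX, brec hzx hS]
      rw [← Summable.tsum_add (summable_mul_of_bounds hPnn hProw z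
          (fun w => (mReachAvoidLE_bounds hPnn hProw S x n w).1)
          (fun w => (mReachAvoidLE_bounds hPnn hProw S x n w).2))
        (summable_mul_of_bounds hPnn hProw z
          (fun w => (mBeforeLE_bounds hPnn hProw {x} S n w).1)
          (fun w => (mBeforeLE_bounds hPnn hProw {x} S n w).2))]
      rw [tsum_congr (fun w => (mul_add (P z w) _ _).symm :
        ∀ w, P z w * mReachAvoidLE P S x n w + P z w * mBeforeLE P {x} S n w
          = P z w * (mReachAvoidLE P S x n w + mBeforeLE P {x} S n w))]
      exact tsum_mul_le_one hPnn hProw z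
        (fun w => add_nonneg (mReachAvoidLE_bounds hPnn hProw S x n w).1
          (mBeforeLE_bounds hPnn hProw {x} S n w).1) (fun w => ih w)

/-- (iv): hitting `S` implies avoiding `x` or hitting `x` first. -/
private lemma hit_le_split (hPnn : ∀ z w, 0 ≤ P z w) (hProw : ∀ z, ∑' w, P z w = 1) (S : Set σ) (x : σ) (hxS : x ∉ S) :
    ∀ n z, mHitLE P S n z ≤ mReachAvoidLE P S x n z + mBeforeLE P {x} S n z := by
  intro n
  induction n with
  | zero =>
    intro z
    by_cases hS : z ∈ S
    · rw [hval1 hS, raval1 hS]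
      exact le_add_of_nonneg_right (mBeforeLE_bounds hPnn hProw {x} S 0 z).1
    · rw [hval00 hS]
      exact add_nonneg (mReachAvoidLE_bounds hPnn hProw S x 0 z).1
        (mBeforeLE_bounds hPnn hProw {x} S 0 z).1
  | succ n ih =>
    intro z
    by_cases hS : z ∈ S
    · rw [hval1 hS, raval1 hS]
      exact le_add_of_nonneg_right (mBeforeLE_bounds hPnn hProw {x} S (n + 1) z).1
    by_cases hX : z = x
    · subst hX
      rw [ravalx hxS, bval1 (Set.mem_singleton z), zero_add]
      exact (mHitLE_bounds hPnn hProw S (n + 1) z).2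
    · have hzx : z ∉ ({x} : Set σ) := by simpa using hX
      rw [hrec0 hS, rarec hS hX, brec hzx hS]
      calc ∑' w, P z w * mHitLE P S n w
          ≤ ∑' w, P z w * (mReachAvoidLE P S x n w + mBeforeLE P {x} S n w) := by
            refine tsum_mul_mono hPnn hProw z (C := 2)
              (fun w => (mHitLE_bounds hPnn hProw S n w).1) ih (fun w => ?_)
            have h1 := (mReachAvoidLE_bounds hPnn hProw S x n w).2
            have h2 := (mBeforeLE_bounds hPnn hProw {x} S n w).2
            linarith
        _ = _ := by
            rw [tsum_congr (fun w => mul_add (P z w) _ _ :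
              ∀ w, P z w * (mReachAvoidLE P S x n w + mBeforeLE P {x} S n w)
                = P z w * mReachAvoidLE P S x n w + P z w * mBeforeLE P {x} S n w)]
            exact Summable.tsum_add (summable_mul_of_bounds hPnn hProw z
                (fun w => (mReachAvoidLE_bounds hPnn hProw S x n w).1)
                (fun w => (mReachAvoidLE_bounds hPnn hProw S x n w).2))
              (summable_mul_of_bounds hPnn hProw z
                (fun w => (mBeforeLE_bounds hPnn hProw {x} S n w).1)
                (fun w => (mBeforeLE_bounds hPnn hProw {x} S n w).2))

/-- (v): hitting `x` first then reaching `S`, bounded by product. -/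
private lemma retReach_le (hPnn : ∀ z w, 0 ≤ P z w) (hProw : ∀ z, ∑' w, P z w = 1) (S : Set σ) (x : σ) (hxS : x ∉ S) :
    ∀ n z, mRetReach P S x n z ≤ mBeforeLE P {x} S n z * mHitLE P S n x := by
  intro n
  induction n with
  | zero =>
    intro z
    rw [show mRetReach P S x 0 z = 0 from rfl]
    exact mul_nonneg (mBeforeLE_bounds hPnn hProw {x} S 0 z).1
      (mHitLE_bounds hPnn hProw S 0 x).1
  | succ n ih =>
    intro z
    by_cases hS : z ∈ S
    · rw [rbvalS hS]
      exact mul_nonneg (mBeforeLE_bounds hPnn hProw {x} S (n + 1) z).1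
        (mHitLE_bounds hPnn hProw S (n + 1) x).1
    by_cases hX : z = x
    · subst hX
      rw [rbvalx hxS, bval1 (Set.mem_singleton z), one_mul]
    · have hzx : z ∉ ({x} : Set σ) := by simpa using hX
      rw [rbrec hS hX, brec hzx hS]
      have hh0 := (mHitLE_bounds hPnn hProw S n x).1
      calc ∑' w, P z w * mRetReach P S x n w
          ≤ ∑' w, P z w * (mBeforeLE P {x} S n w * mHitLE P S n x) := by
            refine tsum_mul_mono hPnn hProw z (C := 1)
              (fun w => (mRetReach_bounds hPnn hProw S x n w).1) ih (fun w => ?_)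
            exact mul_le_one₀ (mBeforeLE_bounds hPnn hProw {x} S n w).2 hh0
              (mHitLE_bounds hPnn hProw S n x).2
        _ = (∑' w, P z w * mBeforeLE P {x} S n w) * mHitLE P S n x := by
            rw [tsum_congr (fun w => (mul_assoc (P z w) _ _).symm :
              ∀ w, P z w * (mBeforeLE P {x} S n w * mHitLE P S n x)
                = P z w * mBeforeLE P {x} S n w * mHitLE P S n x)]
            exact tsum_mul_right
        _ ≤ (∑' w, P z w * mBeforeLE P {x} S n w) * mHitLE P S (n + 1) x := by
            refine mul_le_mul_of_nonneg_left (mHitLE_mono hPnn hProw S n x) ?_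
            exact tsum_nonneg fun w => mul_nonneg (hPnn z w)
              (mBeforeLE_bounds hPnn hProw {x} S n w).1

/-- (vi): hitting `S` implies avoiding `x` or (hitting `x` first and still reaching). -/
private lemma hit_le_split2 (hPnn : ∀ z w, 0 ≤ P z w) (hProw : ∀ z, ∑' w, P z w = 1) (S : Set σ) (x : σ) (hxS : x ∉ S) :
    ∀ n z, mHitLE P S n z ≤ mReachAvoidLE P S x n z + mRetReach P S x n z := by
  intro n
  induction n with
  | zero =>
    intro z
    by_cases hS : z ∈ S
    · rw [hval1 hS, raval1 hS, rbvalS hS]; norm_num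
    · rw [hval00 hS]
      exact add_nonneg (mReachAvoidLE_bounds hPnn hProw S x 0 z).1
        (mRetReach_bounds hPnn hProw S x 0 z).1
  | succ n ih =>
    intro z
    by_cases hS : z ∈ S
    · rw [hval1 hS, raval1 hS, rbvalS hS]; norm_num
    by_cases hX : z = x
    · subst hX
      rw [ravalx hxS, rbvalx hxS, zero_add]
    · have hzx : z ∉ ({x} : Set σ) := by simpa using hX
      rw [hrec0 hS, rarec hS hX, rbrec hS hX]
      calc ∑' w, P z w * mHitLE P S n w
          ≤ ∑' w, P z w * (mReachAvoidLE P S x n w + mRetReach P S x n w) := by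
            refine tsum_mul_mono hPnn hProw z (C := 2)
              (fun w => (mHitLE_bounds hPnn hProw S n w).1) ih (fun w => ?_)
            have h1 := (mReachAvoidLE_bounds hPnn hProw S x n w).2
            have h2 := (mRetReach_bounds hPnn hProw S x n w).2
            linarith
        _ = _ := by
            rw [tsum_congr (fun w => mul_add (P z w) _ _ :
              ∀ w, P z w * (mReachAvoidLE P S x n w + mRetReach P S x n w)
                = P z w * mReachAvoidLE P S x n w + P z w * mRetReach P S x n w)]
            exact Summable.tsum_add (summable_mul_of_bounds hPnn hProw z
                (fun w => (mReachAvoidLE_bounds hPnn hProw S x n w).1)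
                (fun w => (mReachAvoidLE_bounds hPnn hProw S x n w).2))
              (summable_mul_of_bounds hPnn hProw z
                (fun w => (mRetReach_bounds hPnn hProw S x n w).1)
                (fun w => (mRetReach_bounds hPnn hProw S x n w).2))

/-- Monotone convergence of `∑' z, P x z * F n z` as `n → ∞`. -/
private lemma tendsto_tsum_sup (hPnn : ∀ z w, 0 ≤ P z w) (hProw : ∀ z, ∑' w, P z w = 1) (x : σ) {F : ℕ → σ → ℝ}
    (hb : ∀ n z, 0 ≤ F n z ∧ F n z ≤ 1) (hm : ∀ n z, F n z ≤ F (n + 1) z) :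
    Filter.Tendsto (fun n => ∑' z, P x z * F n z) Filter.atTop
      (nhds (∑' z, P x z * ⨆ n, F n z)) := by
  apply tendsto_tsum_of_dominated_convergence (summable_row hProw x)
  · intro z
    exact (tendsto_sup_of_mono (fun n => hm n z) (fun n => (hb n z).2)).const_mul (P x z)
  · filter_upwards with n z
    rw [Real.norm_eq_abs, abs_of_nonneg (mul_nonneg (hPnn x z) (hb n z).1)]
    exact mul_le_of_le_one_right (hPnn x z) (hb n z).2

end KeyIneq

end AuxIndep

/-- for a recurrent Markov chain on a countable state space, disjoint `A, B`
and `x ∉ A ∪ B`, the events `{τ_A < τ_B}` and `{τ⁺_x > τ_{A∪B}}` are independent under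
`P_x`; in particular `P_x[τ_A < τ_B] = P_x[τ_A < τ_B ∣ τ⁺_x > τ_{A∪B}]`.
Here `P_x[τ_A < τ_B, τ⁺_x > τ_{A∪B}] = ∑_z P(x,z) P_z[reach A before B avoiding x]` and
`P_x[τ⁺_x > τ_{A∪B}] = ∑_z P(x,z) P_z[reach A∪B avoiding x]`. -/
theorem before_indep_of_avoid_return [Countable σ] (P : σ → σ → ℝ)
    (hPnn : ∀ z w, 0 ≤ P z w) (hProw : ∀ z, ∑' w, P z w = 1)
    (A B : Set σ) (hAB : Disjoint A B) (x : σ) (hx : x ∉ A ∪ B)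
    (hrec : ∀ z : σ, (⨆ n : ℕ, mHitLE P (A ∪ B) n z) = 1) :
    (∑' z, P x z * ⨆ n, mBeforeAvoidLE P A B x n z) =
        (⨆ n, mBeforeLE P A B n x) * (∑' z, P x z * ⨆ n, mReachAvoidLE P (A ∪ B) x n z) ∧
      (⨆ n, mBeforeLE P A B n x) =
        (∑' z, P x z * ⨆ n, mBeforeAvoidLE P A B x n z) /
          (∑' z, P x z * ⨆ n, mReachAvoidLE P (A ∪ B) x n z) := by
  have hxA : x ∉ A := fun h => hx (Set.mem_union_left B h)
  have hxB : x ∉ B := fun h => hx (Set.mem_union_right A h)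
  set S := A ∪ B with hSdef
  have hbB := mBeforeLE_bounds hPnn hProw A B
  have hbM := mBeforeLE_mono hPnn hProw A B
  have hbaB := mBeforeAvoidLE_bounds hPnn hProw A B x
  have hbaM := mBeforeAvoidLE_mono hPnn hProw A B x
  have hraB := mReachAvoidLE_bounds hPnn hProw S x
  have hraM := mReachAvoidLE_mono hPnn hProw S x
  have hrB := mBeforeLE_bounds hPnn hProw {x} S
  have hrM := mBeforeLE_mono hPnn hProw {x} S
  have hhB := mHitLE_bounds hPnn hProw S
  have hrbB := mRetReach_bounds hPnn hProw S x
  set u := ⨆ n, mBeforeLE P A B n x with hudef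
  have hu0 : 0 ≤ u := Real.iSup_nonneg fun n => (hbB n x).1
  have hBA0 : ∀ z, 0 ≤ ⨆ n, mBeforeAvoidLE P A B x n z := fun z =>
    Real.iSup_nonneg fun n => (hbaB n z).1
  have hBA1 : ∀ z, (⨆ n, mBeforeAvoidLE P A B x n z) ≤ 1 := fun z =>
    ciSup_le fun n => (hbaB n z).2
  have hR0 : ∀ z, 0 ≤ ⨆ n, mBeforeLE P {x} S n z := fun z =>
    Real.iSup_nonneg fun n => (hrB n z).1
  have hR1 : ∀ z, (⨆ n, mBeforeLE P {x} S n z) ≤ 1 := fun z =>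
    ciSup_le fun n => (hrB n z).2
  have hRA0 : ∀ z, 0 ≤ ⨆ n, mReachAvoidLE P S x n z := fun z =>
    Real.iSup_nonneg fun n => (hraB n z).1
  have hRA1 : ∀ z, (⨆ n, mReachAvoidLE P S x n z) ≤ 1 := fun z =>
    ciSup_le fun n => (hraB n z).2
  have sumBA : Summable fun z => P x z * ⨆ n, mBeforeAvoidLE P A B x n z :=
    summable_mul_of_bounds hPnn hProw x hBA0 hBA1
  have sumR : Summable fun z => P x z * ⨆ n, mBeforeLE P {x} S n z :=
    summable_mul_of_bounds hPnn hProw x hR0 hR1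
  have sumRA : Summable fun z => P x z * ⨆ n, mReachAvoidLE P S x n z :=
    summable_mul_of_bounds hPnn hProw x hRA0 hRA1
  -- Step A: renewal decomposition, pointwise in `z`
  have stepA : ∀ z, (⨆ n, mBeforeLE P A B n z) =
      (⨆ n, mBeforeAvoidLE P A B x n z) + (⨆ n, mBeforeLE P {x} S n z) * u := by
    intro z
    apply le_antisymm
    · refine ciSup_le fun n => (key_le_split hPnn hProw A B x hxA hxB n z).trans ?_
      exact add_le_add (le_sup_of_le_one (fun m => (hbaB m z).2) n)
        (mul_le_mul_of_nonneg_right (le_sup_of_le_one (fun m => (hrB m z).2) n) hu0)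
    · have h1 : ∀ n, mBeforeAvoidLE P A B x n z + mBeforeLE P {x} S n z * u ≤
          ⨆ m, mBeforeLE P A B m z := by
        intro n
        have ht : Filter.Tendsto (fun m => mBeforeAvoidLE P A B x n z +
            mBeforeLE P {x} S n z * mBeforeLE P A B m x) Filter.atTop
            (nhds (mBeforeAvoidLE P A B x n z + mBeforeLE P {x} S n z * u)) :=
          tendsto_const_nhds.add ((tendsto_sup_of_mono (fun m => hbM m x)
            (fun m => (hbB m x).2)).const_mul _)
        refine le_of_tendsto ht (Filter.Eventually.of_forall fun m => ?_)
        exact (key_ge_split hPnn hProw A B x hxA hxB n m z).trans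
          (le_sup_of_le_one (fun k => (hbB k z).2) (n + m))
      have h2 : Filter.Tendsto (fun n => mBeforeAvoidLE P A B x n z +
          mBeforeLE P {x} S n z * u) Filter.atTop
          (nhds ((⨆ n, mBeforeAvoidLE P A B x n z) + (⨆ n, mBeforeLE P {x} S n z) * u)) :=
        (tendsto_sup_of_mono (fun n => hbaM n z) (fun n => (hbaB n z).2)).add
          ((tendsto_sup_of_mono (fun n => hrM n z) (fun n => (hrB n z).2)).mul_const u)
      exact le_of_tendsto h2 (Filter.Eventually.of_forall h1)
  -- Step B: complementarity of avoiding `x` and hitting `x` first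
  have stepB : ∀ z, (⨆ n, mReachAvoidLE P S x n z) + (⨆ n, mBeforeLE P {x} S n z) = 1 := by
    intro z
    apply le_antisymm
    · have h2 : Filter.Tendsto (fun n => mReachAvoidLE P S x n z + mBeforeLE P {x} S n z)
          Filter.atTop
          (nhds ((⨆ n, mReachAvoidLE P S x n z) + ⨆ n, mBeforeLE P {x} S n z)) :=
        (tendsto_sup_of_mono (fun n => hraM n z) (fun n => (hraB n z).2)).add
          (tendsto_sup_of_mono (fun n => hrM n z) (fun n => (hrB n z).2))
      exact le_of_tendsto h2
        (Filter.Eventually.of_forall fun n => disj_le_one hPnn hProw S x hx n z)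
    · rw [← hrec z]
      refine ciSup_le fun n => (hit_le_split hPnn hProw S x hx n z).trans ?_
      exact add_le_add (le_sup_of_le_one (fun m => (hraB m z).2) n)
        (le_sup_of_le_one (fun m => (hrB m z).2) n)
  -- Step C: one-step decomposition of `u`
  have stepC : u = ∑' z, P x z * ⨆ n, mBeforeLE P A B n z := by
    have t1 : Filter.Tendsto (fun n => mBeforeLE P A B (n + 1) x) Filter.atTop (nhds u) :=
      (tendsto_sup_of_mono (fun n => hbM n x) (fun n => (hbB n x).2)).comp
        (Filter.tendsto_add_atTop_nat 1)
    have t1' : Filter.Tendsto (fun n => ∑' z, P x z * mBeforeLE P A B n z)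
        Filter.atTop (nhds u) := by
      have e : (fun n => mBeforeLE P A B (n + 1) x)
          = fun n => ∑' z, P x z * mBeforeLE P A B n z := funext fun n => brec hxA hxB n
      rwa [e] at t1
    exact tendsto_nhds_unique t1' (tendsto_tsum_sup hPnn hProw x hbB hbM)
  -- Step D
  have stepD : u = (∑' z, P x z * ⨆ n, mBeforeAvoidLE P A B x n z) +
      (∑' z, P x z * ⨆ n, mBeforeLE P {x} S n z) * u := by
    calc u = ∑' z, P x z * ⨆ n, mBeforeLE P A B n z := stepC
      _ = ∑' z, (P x z * (⨆ n, mBeforeAvoidLE P A B x n z) +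
          (P x z * ⨆ n, mBeforeLE P {x} S n z) * u) :=
        tsum_congr fun z => by rw [stepA z]; ring
      _ = _ := by rw [Summable.tsum_add sumBA (sumR.mul_right u), tsum_mul_right]
  -- Step E
  have stepE : (∑' z, P x z * ⨆ n, mReachAvoidLE P S x n z) +
      (∑' z, P x z * ⨆ n, mBeforeLE P {x} S n z) = 1 := by
    rw [← Summable.tsum_add sumRA sumR]
    calc ∑' z, (P x z * (⨆ n, mReachAvoidLE P S x n z) +
          P x z * ⨆ n, mBeforeLE P {x} S n z)
        = ∑' z, P x z := tsum_congr fun z => by rw [← mul_add, stepB z, mul_one]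
      _ = 1 := hProw x
  set p := ∑' z, P x z * ⨆ n, mBeforeAvoidLE P A B x n z with hpdef
  set q := ∑' z, P x z * ⨆ n, mReachAvoidLE P S x n z with hqdef
  have hq2 : (∑' z, P x z * ⨆ n, mBeforeLE P {x} S n z) = 1 - q := by linarith [stepE]
  rw [hq2] at stepD
  have hpq : p = u * q := by nlinarith [stepD]
  -- q ≠ 0
  have hqne : q ≠ 0 := by
    intro h0
    have hterm : ∀ z, P x z * ⨆ n, mReachAvoidLE P S x n z = 0 := by
      intro z
      have hle : P x z * (⨆ n, mReachAvoidLE P S x n z) ≤ q :=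
        Summable.le_tsum sumRA z fun w _ => mul_nonneg (hPnn x w) (hRA0 w)
      have hge : 0 ≤ P x z * ⨆ n, mReachAvoidLE P S x n z :=
        mul_nonneg (hPnn x z) (hRA0 z)
      linarith
    have hra0 : ∀ n z, P x z * mReachAvoidLE P S x n z = 0 := by
      intro n z
      have h1 : P x z * mReachAvoidLE P S x n z ≤ P x z * ⨆ m, mReachAvoidLE P S x m z :=
        mul_le_mul_of_nonneg_left (le_sup_of_le_one (fun m => (hraB m z).2) n) (hPnn x z)
      have h2 : 0 ≤ P x z * mReachAvoidLE P S x n z := mul_nonneg (hPnn x z) (hraB n z).1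
      linarith [hterm z]
    have hzero : ∀ n, mHitLE P S n x = 0 := by
      intro n
      induction n with
      | zero => exact hval00 hx
      | succ n ih =>
        have hnn : 0 ≤ mHitLE P S (n + 1) x := (hhB (n + 1) x).1
        have le1 : mHitLE P S (n + 1) x ≤
            ∑' z, P x z * (mReachAvoidLE P S x n z + mRetReach P S x n z) := by
          rw [hrec0 hx n]
          refine tsum_mul_mono hPnn hProw x (C := 2) (fun z => (hhB n z).1)
            (fun z => hit_le_split2 hPnn hProw S x hx n z) (fun z => ?_)
          linarith [(hraB n z).2, (hrbB n z).2]
        have eq2 : ∑' z, P x z * (mReachAvoidLE P S x n z + mRetReach P S x n z)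
            = (∑' z, P x z * mReachAvoidLE P S x n z) +
              ∑' z, P x z * mRetReach P S x n z := by
          rw [tsum_congr (fun z => mul_add (P x z) _ _ :
            ∀ z, P x z * (mReachAvoidLE P S x n z + mRetReach P S x n z)
              = P x z * mReachAvoidLE P S x n z + P x z * mRetReach P S x n z)]
          exact Summable.tsum_add (summable_mul_of_bounds hPnn hProw x
              (fun z => (hraB n z).1) (fun z => (hraB n z).2))
            (summable_mul_of_bounds hPnn hProw x
              (fun z => (hrbB n z).1) (fun z => (hrbB n z).2))
        have z1 : (∑' z, P x z * mReachAvoidLE P S x n z) = 0 := by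
          calc (∑' z, P x z * mReachAvoidLE P S x n z) = ∑' _ : σ, (0 : ℝ) :=
              tsum_congr fun z => hra0 n z
            _ = 0 := tsum_zero
        have le3 : (∑' z, P x z * mRetReach P S x n z) ≤ 0 := by
          calc (∑' z, P x z * mRetReach P S x n z)
              ≤ ∑' z, P x z * (mBeforeLE P {x} S n z * mHitLE P S n x) :=
                tsum_mul_mono hPnn hProw x (C := 1) (fun z => (hrbB n z).1)
                  (fun z => retReach_le hPnn hProw S x hx n z)
                  (fun z => mul_le_one₀ (hrB n z).2 (hhB n x).1 (hhB n x).2)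
            _ = 0 := by rw [ih]; simp
        linarith [le1, eq2, z1, le3, hnn]
    have hsup0 : (⨆ n, mHitLE P S n x) = 0 := by
      simp only [hzero, ciSup_const]
    rw [hrec x] at hsup0
    norm_num at hsup0
  refine ⟨hpq, ?_⟩
  rw [hpq, mul_div_assoc, div_self hqne, mul_one]

end GeneralChain
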